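/- For every D ⊆ E admitting a d-flow and every e ∈ E such that D contains either both or neither of e and rev e (i.e. |D ∩ {e, rev e}| ≠ 1), it holds that ψ_e(φ_e(D)) = D. -/
import Mathlib


open Finset

section Defs

variable {V : Type*}

/-- Reversal of a directed edge. -/
def drev (e : V × V) : V × V := (e.2, e.1)

/-- `K` is a subgraph of the (symmetric) edge set `E`: it contains either both or
neither of `e` and `drev e` for every `e ∈ E`. -/
def IsSubgraph [DecidableEq V] (E K : Finset (V × V)) : Prop :=
  K ⊆ E ∧ ∀ e ∈ E, (e ∈ K ↔ drev e ∈ K)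

/-- `L` is an orientation of the (symmetric) edge set `E`: it contains exactly one of
`e` and `drev e` for every `e ∈ E`. -/
def IsOrientation [DecidableEq V] (E L : Finset (V × V)) : Prop :=
  L ⊆ E ∧ ∀ e ∈ E, (e ∈ L ↔ drev e ∉ L)

variable [Fintype V] [DecidableEq V]

/-- `f` is a `d`-flow on the directed subgraph `D` of the graph with edge set `E`. -/
def IsFlow (E D : Finset (V × V)) (d : V → ℤ) (f : V × V → ℝ) : Prop :=
  (∀ e ∈ E, 0 ≤ f e ∧ f e ≤ 1) ∧
  (∀ e, e ∉ D → f e = 0) ∧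
  ∀ u : V,
    ((Finset.univ.filter (fun v : V => (u, v) ∈ E)).sum fun v => f (u, v)) -
      ((Finset.univ.filter (fun v : V => (v, u) ∈ E)).sum fun v => f (v, u)) = (d u : ℝ)

/-- A `d`-flow exists on `D`. -/
def AdmitsFlow (E D : Finset (V × V)) (d : V → ℤ) : Prop :=
  ∃ f : V × V → ℝ, IsFlow E D d f

/-- The `w`-cost of a flow `f`. -/
def flowCost (E : Finset (V × V)) (w : V × V → ℝ) (f : V × V → ℝ) : ℝ :=
  ∑ e ∈ E, w e * f e

/-- `f` is a min-cost `d`-flow on `D`. -/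
def IsMinCostFlow (E D : Finset (V × V)) (d : V → ℤ) (w : V × V → ℝ)
    (f : V × V → ℝ) : Prop :=
  IsFlow E D d f ∧ ∀ g : V × V → ℝ, IsFlow E D d g → flowCost E w f ≤ flowCost E w g

/-- The `{0,1}`-valued function determined by a set of edges. -/
def ind (S : Finset (V × V)) : V × V → ℝ := fun e => if e ∈ S then 1 else 0

/-- `A` assigns to every flow-admitting `D ⊆ E` the (edge set of the) unique,
`{0,1}`-valued min-cost `d`-flow on `D`. -/
def GoodA (E : Finset (V × V)) (d : V → ℤ) (w : V × V → ℝ)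
    (A : Finset (V × V) → Finset (V × V)) : Prop :=
  ∀ D : Finset (V × V), D ⊆ E → AdmitsFlow E D d →
    IsMinCostFlow E D d w (ind (A D)) ∧
    ∀ f : V × V → ℝ, IsMinCostFlow E D d w f → f = ind (A D)

/-- `A(D) = A(D')`: both `D` and `D'` admit a `d`-flow and their unique min-cost
`d`-flows coincide.  (If one of them admits no `d`-flow this is false.) -/
def AEq (E : Finset (V × V)) (d : V → ℤ) (A : Finset (V × V) → Finset (V × V))
    (D D' : Finset (V × V)) : Prop :=
  AdmitsFlow E D d ∧ AdmitsFlow E D' d ∧ A D = A D'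

/-- `D ⊕ e := (D ∪ {e}) \ {drev e}`. -/
def oplus (D : Finset (V × V)) (e : V × V) : Finset (V × V) := insert e D \ {drev e}

/-- `D + e := D ∪ {e, drev e}`. -/
def padd (D : Finset (V × V)) (e : V × V) : Finset (V × V) := D ∪ {e, drev e}

/-- `D − e := D \ {e, drev e}`. -/
def psub (D : Finset (V × V)) (e : V × V) : Finset (V × V) := D \ {e, drev e}

/-- The representative of `{e, drev e}` lying in the reference orientation `E'`. -/
def chi (E' : Finset (V × V)) (e : V × V) : V × V := if e ∈ E' then e else drev e

/-- The map `φ_e`. -/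
noncomputable def phiE (E : Finset (V × V)) (d : V → ℤ)
    (A : Finset (V × V) → Finset (V × V)) (E' : Finset (V × V))
    (e : V × V) (D : Finset (V × V)) : Finset (V × V) := by
  classical
  exact
    if ¬ AEq E d A D (oplus D e) then oplus D (drev e)
    else if ¬ AEq E d A D (oplus D (drev e)) then oplus D e
    else if e ∈ D then oplus D (chi E' e) else oplus D (drev (chi E' e))

/-- The map `ψ_e`. -/
noncomputable def psiE (E : Finset (V × V)) (d : V → ℤ)
    (A : Finset (V × V) → Finset (V × V)) (E' : Finset (V × V))
    (e : V × V) (D : Finset (V × V)) : Finset (V × V) := by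
  classical
  exact
    if ¬ AEq E d A D (padd D e) then psub D e
    else if ¬ AEq E d A D (psub D e) then padd D e
    else if chi E' e ∈ D then padd D e else psub D e

end Defs
section Aux
open Finset
variable {V : Type*} [Fintype V] [DecidableEq V]
variable {E : Finset (V × V)} {d : V → ℤ} {w : V × V → ℝ}
  {A : Finset (V × V) → Finset (V × V)}

lemma drev_drev (e : V × V) : drev (drev e) = e := rfl

lemma drev_ne {e : V × V} (h : e.1 ≠ e.2) : e ≠ drev e :=
  fun heq => h (congrArg Prod.fst heq)

lemma ind_eq_one {S : Finset (V × V)} {x : V × V} (h : x ∈ S) : ind S x = 1 := if_pos h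
lemma ind_eq_zero {S : Finset (V × V)} {x : V × V} (h : x ∉ S) : ind S x = 0 := if_neg h

lemma ind_inj {S T : Finset (V × V)} (h : ind S = ind T) : S = T := by
  ext x
  have hx := congrFun h x
  by_cases h1 : x ∈ S <;> by_cases h2 : x ∈ T <;> simp_all [ind]

lemma IsFlow.superset {D D' : Finset (V × V)} {f : V × V → ℝ}
    (hf : IsFlow E D d f) (h : D ⊆ D') : IsFlow E D' d f :=
  ⟨hf.1, fun x hx => hf.2.1 x fun hxD => hx (h hxD), hf.2.2⟩

lemma IsFlow.support {D D' : Finset (V × V)} {f : V × V → ℝ}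
    (hf : IsFlow E D d f) (h : ∀ x ∉ D', f x = 0) : IsFlow E D' d f :=
  ⟨hf.1, h, hf.2.2⟩

lemma AdmitsFlow.superset {D D' : Finset (V × V)}
    (hf : AdmitsFlow E D d) (h : D ⊆ D') : AdmitsFlow E D' d :=
  hf.elim fun f hf => ⟨f, hf.superset h⟩

lemma A_subset (hA : GoodA E d w A) {D : Finset (V × V)} (hD : D ⊆ E)
    (hDf : AdmitsFlow E D d) : A D ⊆ D := by
  intro x hx
  by_contra hx'
  have h0 := ((hA D hD hDf).1.1).2.1 x hx'
  rw [ind_eq_one hx] at h0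
  norm_num at h0

lemma A_shrink (hA : GoodA E d w A) {D D' : Finset (V × V)} (hD : D ⊆ E)
    (hDf : AdmitsFlow E D d) (h1 : A D ⊆ D') (h2 : D' ⊆ D) :
    AdmitsFlow E D' d ∧ A D' = A D := by
  obtain ⟨hmin, -⟩ := hA D hD hDf
  have hflow' : IsFlow E D' d (ind (A D)) :=
    hmin.1.support fun x hx => ind_eq_zero fun h => hx (h1 h)
  have hadm : AdmitsFlow E D' d := ⟨_, hflow'⟩
  refine ⟨hadm, ?_⟩
  have hmin' : IsMinCostFlow E D' d w (ind (A D)) :=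
    ⟨hflow', fun g hg => hmin.2 g (hg.superset h2)⟩
  exact (ind_inj ((hA D' (h2.trans hD) hadm).2 _ hmin')).symm

lemma min_lt (hA : GoodA E d w A) {D : Finset (V × V)} {g : V × V → ℝ} (hD : D ⊆ E)
    (hDf : AdmitsFlow E D d) (hg : IsFlow E D d g) (hne : g ≠ ind (A D)) :
    flowCost E w (ind (A D)) < flowCost E w g := by
  obtain ⟨hmin, huniq⟩ := hA D hD hDf
  rcases lt_or_eq_of_le (hmin.2 g hg) with h | h
  · exact h
  · exact absurd (huniq g ⟨hg, fun h' hh' => h ▸ hmin.2 h' hh'⟩) hne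



open Finset
set_option linter.unusedSectionVars false
variable {V : Type*} [Fintype V] [DecidableEq V]
variable {E : Finset (V × V)} {d : V → ℤ} {w : V × V → ℝ}
  {A : Finset (V × V) → Finset (V × V)}

/-- indicator of the unordered pair `{e, drev e}` -/
def ind2 (e : V × V) : V × V → ℝ := fun x => if x = e ∨ x = drev e then 1 else 0

lemma ind2_split {e : V × V} (h : e ≠ drev e) (x : V × V) :
    ind2 e x = (if x = e then (1 : ℝ) else 0) + (if x = drev e then 1 else 0) := by
  rcases eq_or_ne x e with rfl | h1
  · simp [ind2, h]
  · simp [ind2, h1]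

lemma sum_pair_eq (c : V × V) (u : V) :
    (∑ v : V, (if (u, v) = c then (1 : ℝ) else 0)) = if u = c.1 then 1 else 0 := by
  rcases eq_or_ne u c.1 with h | h <;> simp [Prod.ext_iff, h]

lemma sum_pair_eq' (c : V × V) (u : V) :
    (∑ v : V, (if (v, u) = c then (1 : ℝ) else 0)) = if u = c.2 then 1 else 0 := by
  rcases eq_or_ne u c.2 with h | h <;> simp [Prod.ext_iff, h, and_comm]

lemma ind2_div (hE_symm : ∀ e, e ∈ E ↔ drev e ∈ E) {e : V × V} (he : e ∈ E)
    (hne : e.1 ≠ e.2) (u : V) :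
    ((univ.filter fun v : V => (u, v) ∈ E).sum fun v => ind2 e (u, v)) =
      ((univ.filter fun v : V => (v, u) ∈ E).sum fun v => ind2 e (v, u)) := by
  have hre : drev e ∈ E := (hE_symm e).1 he
  have hd : e ≠ drev e := drev_ne hne
  have h0 : ∀ x : V × V, x ∉ E → ind2 e x = 0 := by
    intro x hx
    unfold ind2
    rw [if_neg]
    rintro (rfl | rfl)
    · exact hx he
    · exact hx hre
  rw [Finset.sum_filter, Finset.sum_filter]
  have e1 : ∀ v : V, (if (u, v) ∈ E then ind2 e (u, v) else 0) = ind2 e (u, v) := fun v => by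
    by_cases h : (u, v) ∈ E
    · rw [if_pos h]
    · rw [if_neg h, h0 _ h]
  have e2 : ∀ v : V, (if (v, u) ∈ E then ind2 e (v, u) else 0) = ind2 e (v, u) := fun v => by
    by_cases h : (v, u) ∈ E
    · rw [if_pos h]
    · rw [if_neg h, h0 _ h]
  rw [Finset.sum_congr rfl fun v _ => e1 v, Finset.sum_congr rfl fun v _ => e2 v]
  have l1 : (∑ v : V, ind2 e (u, v))
      = (if u = e.1 then (1 : ℝ) else 0) + (if u = e.2 then 1 else 0) := by
    simp only [ind2_split hd]
    rw [Finset.sum_add_distrib, sum_pair_eq e u, sum_pair_eq (drev e) u]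
    rfl
  have l2 : (∑ v : V, ind2 e (v, u))
      = (if u = e.2 then (1 : ℝ) else 0) + (if u = e.1 then 1 else 0) := by
    simp only [ind2_split hd]
    rw [Finset.sum_add_distrib, sum_pair_eq' e u, sum_pair_eq' (drev e) u]
    rfl
  rw [l1, l2, add_comm]

lemma cancel_flow (hE_symm : ∀ e, e ∈ E ↔ drev e ∈ E) {D : Finset (V × V)}
    {f : V × V → ℝ} {e : V × V} {t : ℝ} (hf : IsFlow E D d f) (he : e ∈ E)
    (hne : e.1 ≠ e.2) (ht0 : 0 ≤ t) (hfe : f e = t) (hfre : f (drev e) = t) :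
    IsFlow E D d (fun x => f x - t * ind2 e x) ∧
      flowCost E w (fun x => f x - t * ind2 e x)
        = flowCost E w f - t * (w e + w (drev e)) := by
  have hre : drev e ∈ E := (hE_symm e).1 he
  have hd : e ≠ drev e := drev_ne hne
  constructor
  · refine ⟨?_, ?_, ?_⟩
    · intro x hx
      obtain ⟨h0, h1⟩ := hf.1 x hx
      by_cases hc : x = e ∨ x = drev e
      · have hval : f x = t := by rcases hc with rfl | rfl <;> [exact hfe; exact hfre]
        have h2 : ind2 e x = 1 := if_pos hc
        simp only [h2, hval, mul_one, sub_self]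
        norm_num
      · have h2 : ind2 e x = 0 := if_neg hc
        simp only [h2, mul_zero, sub_zero]
        exact ⟨h0, h1⟩
    · intro x hx
      have h0 := hf.2.1 x hx
      by_cases hc : x = e ∨ x = drev e
      · have hval : f x = t := by rcases hc with rfl | rfl <;> [exact hfe; exact hfre]
        have ht : t = 0 := by rw [← hval, h0]
        have h2 : ind2 e x = 1 := if_pos hc
        simp [h2, h0, ht]
      · have h2 : ind2 e x = 0 := if_neg hc
        simp [h2, h0]
    · intro u
      have hu := hf.2.2 u
      have hdiv := ind2_div hE_symm he hne u
      simp only [Finset.sum_sub_distrib, ← Finset.mul_sum]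
      rw [hdiv]
      linarith [hu]
  · unfold flowCost
    have h1 : ∀ x ∈ E, w x * (f x - t * ind2 e x) = w x * f x - t * (w x * ind2 e x) :=
      fun x _ => by ring
    rw [Finset.sum_congr rfl h1, Finset.sum_sub_distrib, ← Finset.mul_sum]
    have h2 : ∀ x ∈ E, w x * ind2 e x
        = (if x = e then w x else 0) + (if x = drev e then w x else 0) := by
      intro x _
      rw [ind2_split hd x]
      rcases eq_or_ne x e with rfl | hx1
      · rw [if_pos rfl, if_pos rfl, if_neg hd, if_neg hd]
        ring
      · rcases eq_or_ne x (drev e) with rfl | hx2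
        · rw [if_pos rfl, if_pos rfl, if_neg hx1, if_neg hx1]
          ring
        · rw [if_neg hx1, if_neg hx1, if_neg hx2, if_neg hx2]
          ring
    rw [Finset.sum_congr rfl h2, Finset.sum_add_distrib,
      Finset.sum_ite_eq' E e w, Finset.sum_ite_eq' E (drev e) w, if_pos he, if_pos hre]

lemma avg_flow {D : Finset (V × V)} {f g : V × V → ℝ}
    (hf : IsFlow E D d f) (hg : IsFlow E D d g) :
    IsFlow E D d (fun x => (f x + g x) / 2) ∧
      flowCost E w (fun x => (f x + g x) / 2)
        = (flowCost E w f + flowCost E w g) / 2 := by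
  constructor
  · refine ⟨?_, ?_, ?_⟩
    · intro x hx
      obtain ⟨a, b⟩ := hf.1 x hx
      obtain ⟨c, d'⟩ := hg.1 x hx
      constructor <;> simp only <;> linarith
    · intro x hx
      simp only [hf.2.1 x hx, hg.2.1 x hx]
      norm_num
    · intro u
      have h1 := hf.2.2 u
      have h2 := hg.2.2 u
      simp only [show ∀ a b : ℝ, (a + b) / 2 = a / 2 + b / 2 from fun a b => add_div a b 2,
        Finset.sum_add_distrib, ← Finset.sum_div]
      linarith
  · unfold flowCost
    have h1 : ∀ x ∈ E, w x * ((f x + g x) / 2) = (w x * f x) / 2 + (w x * g x) / 2 :=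
      fun x _ => by ring
    rw [Finset.sum_congr rfl h1, Finset.sum_add_distrib, ← Finset.sum_div, ← Finset.sum_div]
    ring

lemma at_most_one (hA : GoodA E d w A) (hE_symm : ∀ e, e ∈ E ↔ drev e ∈ E)
    (hw : ∀ e ∈ E, 0 < w e) {D : Finset (V × V)} {e : V × V}
    (hD : D ⊆ E) (hDf : AdmitsFlow E D d) (he : e ∈ E) (hne : e.1 ≠ e.2) :
    e ∉ A D ∨ drev e ∉ A D := by
  by_contra h
  push_neg at h
  obtain ⟨hmin, -⟩ := hA D hD hDf
  obtain ⟨hg, hcost⟩ := cancel_flow (w := w) hE_symm hmin.1 he hne zero_le_one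
    (ind_eq_one h.1) (ind_eq_one h.2)
  have hle := hmin.2 _ hg
  have hwe := hw e he
  have hwre := hw _ ((hE_symm e).1 he)
  rw [hcost] at hle
  linarith



open Finset
set_option linter.unusedSectionVars false
variable {V : Type*} [Fintype V] [DecidableEq V]
variable {E : Finset (V × V)} {d : V → ℤ} {w : V × V → ℝ}
  {A : Finset (V × V) → Finset (V × V)}

lemma key_lemma (hA : GoodA E d w A) (hE_symm : ∀ e, e ∈ E ↔ drev e ∈ E)
    (hw : ∀ e ∈ E, 0 < w e) {D : Finset (V × V)} {e : V × V}
    (hD : D ⊆ E) (hDf : AdmitsFlow E D d) (he : e ∈ E) (hne : e.1 ≠ e.2)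
    (heD : e ∉ D) (hreD : drev e ∉ D) (hA1 : A (insert e D) ≠ A D) :
    e ∈ A (D ∪ {e, drev e}) := by
  classical
  have hre : drev e ∈ E := (hE_symm e).1 he
  have hed : e ≠ drev e := drev_ne hne
  set D1 := insert e D with hD1d
  set D3 := D ∪ {e, drev e} with hD3d
  have hDD1 : D ⊆ D1 := subset_insert _ _
  have hD1D3 : D1 ⊆ D3 := by
    intro x hx
    rcases mem_insert.1 hx with rfl | hx
    · exact mem_union_right _ (mem_insert_self _ _)
    · exact mem_union_left _ hx
  have hDD3 : D ⊆ D3 := hDD1.trans hD1D3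
  have hD1E : D1 ⊆ E := by
    intro x hx
    rcases mem_insert.1 hx with rfl | hx
    exacts [he, hD hx]
  have hD3E : D3 ⊆ E := by
    intro x hx
    rcases mem_union.1 hx with hx | hx
    · exact hD hx
    · rcases mem_insert.1 hx with rfl | hx
      · exact he
      · rw [mem_singleton.1 hx]; exact hre
  have hD1f : AdmitsFlow E D1 d := hDf.superset hDD1
  have hD3f : AdmitsFlow E D3 d := hDf.superset hDD3
  have heA1 : e ∈ A D1 := by
    by_contra h
    have hsub : A D1 ⊆ D := by
      intro x hx
      rcases mem_insert.1 (A_subset hA hD1E hD1f hx) with rfl | hx'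
      · exact absurd hx h
      · exact hx'
    exact hA1 (A_shrink hA hD1E hD1f hsub hDD1).2.symm
  have hfD1 : IsFlow E D1 d (ind (A D)) := ((hA D hD hDf).1.1).superset hDD1
  have hlt : flowCost E w (ind (A D1)) < flowCost E w (ind (A D)) :=
    min_lt hA hD1E hD1f hfD1 fun h => hA1 (ind_inj h).symm
  have hc31 : flowCost E w (ind (A D3)) ≤ flowCost E w (ind (A D1)) :=
    (hA D3 hD3E hD3f).1.2 _ (((hA D1 hD1E hD1f).1.1).superset hD1D3)
  by_contra heA3
  have hreA1 : drev e ∉ A D1 := fun h => by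
    rcases mem_insert.1 (A_subset hA hD1E hD1f h) with h' | h'
    · exact hed h'.symm
    · exact hreD h'
  by_cases hreA3 : drev e ∈ A D3
  · -- averaging argument
    obtain ⟨hgf, hgc⟩ := avg_flow (w := w)
      (((hA D1 hD1E hD1f).1.1).superset hD1D3) ((hA D3 hD3E hD3f).1.1)
    have hge : (fun x => (ind (A D1) x + ind (A D3) x) / 2) e = 1 / 2 := by
      simp only [ind_eq_one heA1, ind_eq_zero heA3]
      norm_num
    have hgre : (fun x => (ind (A D1) x + ind (A D3) x) / 2) (drev e) = 1 / 2 := by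
      simp only [ind_eq_zero hreA1, ind_eq_one hreA3]
      norm_num
    obtain ⟨hg'f, hg'c⟩ := cancel_flow (w := w) hE_symm hgf he hne (by norm_num) hge hgre
    have hg'D : IsFlow E D d
        (fun x => (ind (A D1) x + ind (A D3) x) / 2 - 1 / 2 * ind2 e x) := by
      refine hg'f.support ?_
      intro x hx
      rcases eq_or_ne x e with rfl | h1
      · have : ind2 x x = 1 := if_pos (Or.inl rfl)
        simp only [ind_eq_one heA1, ind_eq_zero heA3, this]
        norm_num
      rcases eq_or_ne x (drev e) with rfl | h2
      · have : ind2 e (drev e) = 1 := if_pos (Or.inr rfl)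
        simp only [ind_eq_zero hreA1, ind_eq_one hreA3, this]
        norm_num
      · have hx3 : x ∉ D3 := by
          rw [hD3d]
          simp [hx, h1, h2]
        have i1 : ind (A D1) x = 0 :=
          ind_eq_zero fun h => hx3 (hD1D3 (A_subset hA hD1E hD1f h))
        have i3 : ind (A D3) x = 0 :=
          ind_eq_zero fun h => hx3 (A_subset hA hD3E hD3f h)
        have i2 : ind2 e x = 0 := if_neg (by rintro (h | h) <;> [exact h1 h; exact h2 h])
        simp [i1, i3, i2]
    have hmincost := (hA D hD hDf).1.2 _ hg'D
    rw [hg'c, hgc] at hmincost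
    have hwe := hw e he
    have hwre := hw _ hre
    linarith
  · -- A D3 avoids both e and drev e : it is a flow on D, contradiction
    have hsub : ∀ x, x ∉ D → ind (A D3) x = 0 := by
      intro x hx
      refine ind_eq_zero fun hxA => ?_
      rcases mem_union.1 (A_subset hA hD3E hD3f hxA) with h' | h'
      · exact hx h'
      · rcases mem_insert.1 h' with rfl | h'
        · exact heA3 hxA
        · rw [mem_singleton.1 h'] at hxA
          exact hreA3 hxA
    have hflowD : IsFlow E D d (ind (A D3)) := ((hA D3 hD3E hD3f).1.1).support hsub
    have hmin := (hA D hD hDf).1.2 _ hflowD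
    linarith

variable {E' : Finset (V × V)} {e : V × V} {D : Finset (V × V)}

lemma phiE_eq1 (h : ¬ AEq E d A D (oplus D e)) :
    phiE E d A E' e D = oplus D (drev e) := by
  unfold phiE
  rw [if_pos h]

lemma phiE_eq2 (h1 : AEq E d A D (oplus D e)) (h2 : ¬ AEq E d A D (oplus D (drev e))) :
    phiE E d A E' e D = oplus D e := by
  unfold phiE
  rw [if_neg (not_not_intro h1), if_pos h2]

lemma phiE_eq3 (h1 : AEq E d A D (oplus D e)) (h2 : AEq E d A D (oplus D (drev e)))
    (h3 : e ∈ D) : phiE E d A E' e D = oplus D (chi E' e) := by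
  unfold phiE
  rw [if_neg (not_not_intro h1), if_neg (not_not_intro h2), if_pos h3]

lemma phiE_eq4 (h1 : AEq E d A D (oplus D e)) (h2 : AEq E d A D (oplus D (drev e)))
    (h3 : e ∉ D) : phiE E d A E' e D = oplus D (drev (chi E' e)) := by
  unfold phiE
  rw [if_neg (not_not_intro h1), if_neg (not_not_intro h2), if_neg h3]

lemma psiE_eq1 (h : ¬ AEq E d A D (padd D e)) :
    psiE E d A E' e D = psub D e := by
  unfold psiE
  rw [if_pos h]

lemma psiE_eq2 (h1 : AEq E d A D (padd D e)) (h2 : ¬ AEq E d A D (psub D e)) :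
    psiE E d A E' e D = padd D e := by
  unfold psiE
  rw [if_neg (not_not_intro h1), if_pos h2]

lemma psiE_eq3 (h1 : AEq E d A D (padd D e)) (h2 : AEq E d A D (psub D e))
    (h3 : chi E' e ∈ D) : psiE E d A E' e D = padd D e := by
  unfold psiE
  rw [if_neg (not_not_intro h1), if_neg (not_not_intro h2), if_pos h3]

lemma psiE_eq4 (h1 : AEq E d A D (padd D e)) (h2 : AEq E d A D (psub D e))
    (h3 : chi E' e ∉ D) : psiE E d A E' e D = psub D e := by
  unfold psiE
  rw [if_neg (not_not_intro h1), if_neg (not_not_intro h2), if_neg h3]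

end Aux
theorem psiE_phiE_of_not_one
    {V : Type*} [Fintype V] [DecidableEq V]
    (E : Finset (V × V)) (hE_symm : ∀ e, e ∈ E ↔ drev e ∈ E)
    (hE_ne : ∀ e ∈ E, e.1 ≠ e.2)
    (d : V → ℤ) (hd : ∑ u : V, d u = 0)
    (w : V × V → ℝ) (hw : ∀ e ∈ E, 0 < w e)
    (A : Finset (V × V) → Finset (V × V)) (hA : GoodA E d w A)
    (E' : Finset (V × V)) (hE' : IsOrientation E E')
    (D : Finset (V × V)) (hD : D ⊆ E) (hDf : AdmitsFlow E D d)
    (e : V × V) (he : e ∈ E)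
    (hDe : e ∈ D ↔ drev e ∈ D) :
    psiE E d A E' e (phiE E d A E' e D) = D := by
  classical
  have hre : drev e ∈ E := (hE_symm e).1 he
  have hne : e.1 ≠ e.2 := hE_ne e he
  have hed : e ≠ drev e := drev_ne hne
  have hde : drev e ≠ e := fun h => hed h.symm
  have hchi : chi E' e = e ∨ chi E' e = drev e := by
    unfold chi; split
    exacts [Or.inl rfl, Or.inr rfl]
  by_cases heD : e ∈ D
  case pos =>
    have hreD : drev e ∈ D := hDe.1 heD
    have o1 : oplus D e = D \ {drev e} := by rw [oplus, insert_eq_self.mpr heD]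
    have o2 : oplus D (drev e) = D \ {e} := by
      rw [oplus, insert_eq_self.mpr hreD, drev_drev]
    have pad1 : padd (D \ {drev e}) e = D := by
      ext x
      simp only [padd, mem_union, mem_sdiff, mem_singleton, mem_insert]
      constructor
      · rintro (⟨h, -⟩ | rfl | rfl)
        exacts [h, heD, hreD]
      · intro h
        by_cases hx : x = drev e
        exacts [Or.inr (Or.inr hx), Or.inl ⟨h, hx⟩]
    have pad2 : padd (D \ {e}) e = D := by
      ext x
      simp only [padd, mem_union, mem_sdiff, mem_singleton, mem_insert]
      constructor
      · rintro (⟨h, -⟩ | rfl | rfl)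
        exacts [h, heD, hreD]
      · intro h
        by_cases hx : x = e
        exacts [Or.inr (Or.inl hx), Or.inl ⟨h, hx⟩]
    have ps1 : psub (D \ {drev e}) e = D \ {e, drev e} := by
      ext x
      simp only [psub, mem_sdiff, mem_singleton, mem_insert]
      tauto
    have ps2 : psub (D \ {e}) e = D \ {e, drev e} := by
      ext x
      simp only [psub, mem_sdiff, mem_singleton, mem_insert]
      tauto
    have hADsub : A D ⊆ D := A_subset hA hD hDf
    by_cases h1 : e ∈ A D
    · have h2 : drev e ∉ A D :=
        (at_most_one hA hE_symm hw hD hDf he hne).resolve_left (not_not_intro h1)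
      have hsub1 : A D ⊆ D \ {drev e} := fun x hx =>
        mem_sdiff.2 ⟨hADsub hx, fun hh => h2 (by rw [← mem_singleton.1 hh]; exact hx)⟩
      have hsh := A_shrink hA hD hDf hsub1 sdiff_subset
      have haeq1 : AEq E d A D (oplus D e) := by
        rw [o1]; exact ⟨hDf, hsh.1, hsh.2.symm⟩
      have haeq2 : ¬ AEq E d A D (oplus D (drev e)) := by
        rw [o2]
        rintro ⟨-, hadm, hAA⟩
        have h3 : e ∈ A (D \ {e}) := hAA ▸ h1
        have h4 := A_subset hA (sdiff_subset.trans hD) hadm h3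
        simp at h4
      rw [phiE_eq2 haeq1 haeq2, o1]
      have hkeep : AEq E d A (D \ {drev e}) (padd (D \ {drev e}) e) := by
        rw [pad1]; exact ⟨hsh.1, hDf, hsh.2⟩
      have hdrop : ¬ AEq E d A (D \ {drev e}) (psub (D \ {drev e}) e) := by
        rw [ps1]
        rintro ⟨-, hadm, hAA⟩
        have h3 : e ∈ A (D \ {e, drev e}) := hAA ▸ (hsh.2.symm ▸ h1)
        have h4 := A_subset hA (sdiff_subset.trans hD) hadm h3
        simp at h4
      rw [psiE_eq2 hkeep hdrop, pad1]
    · by_cases h2 : drev e ∈ A D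
      · have haeq1 : ¬ AEq E d A D (oplus D e) := by
          rw [o1]
          rintro ⟨-, hadm, hAA⟩
          have h3 : drev e ∈ A (D \ {drev e}) := hAA ▸ h2
          have h4 := A_subset hA (sdiff_subset.trans hD) hadm h3
          simp at h4
        rw [phiE_eq1 haeq1, o2]
        have hsub2 : A D ⊆ D \ {e} := fun x hx =>
          mem_sdiff.2 ⟨hADsub hx, fun hh => h1 (by rw [← mem_singleton.1 hh]; exact hx)⟩
        have hsh := A_shrink hA hD hDf hsub2 sdiff_subset
        have hkeep : AEq E d A (D \ {e}) (padd (D \ {e}) e) := by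
          rw [pad2]; exact ⟨hsh.1, hDf, hsh.2⟩
        have hdrop : ¬ AEq E d A (D \ {e}) (psub (D \ {e}) e) := by
          rw [ps2]
          rintro ⟨-, hadm, hAA⟩
          have h3 : drev e ∈ A (D \ {e, drev e}) := hAA ▸ (hsh.2.symm ▸ h2)
          have h4 := A_subset hA (sdiff_subset.trans hD) hadm h3
          simp at h4
        rw [psiE_eq2 hkeep hdrop, pad2]
      · have hsub1 : A D ⊆ D \ {drev e} := fun x hx =>
          mem_sdiff.2 ⟨hADsub hx, fun hh => h2 (by rw [← mem_singleton.1 hh]; exact hx)⟩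
        have hsub2 : A D ⊆ D \ {e} := fun x hx =>
          mem_sdiff.2 ⟨hADsub hx, fun hh => h1 (by rw [← mem_singleton.1 hh]; exact hx)⟩
        have hsub0 : A D ⊆ D \ {e, drev e} := fun x hx => mem_sdiff.2 ⟨hADsub hx, by
          rw [mem_insert, mem_singleton]
          rintro (rfl | rfl)
          exacts [h1 hx, h2 hx]⟩
        have hsh1 := A_shrink hA hD hDf hsub1 sdiff_subset
        have hsh2 := A_shrink hA hD hDf hsub2 sdiff_subset
        have hsh0 := A_shrink hA hD hDf hsub0 sdiff_subset
        have haeq1 : AEq E d A D (oplus D e) := by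
          rw [o1]; exact ⟨hDf, hsh1.1, hsh1.2.symm⟩
        have haeq2 : AEq E d A D (oplus D (drev e)) := by
          rw [o2]; exact ⟨hDf, hsh2.1, hsh2.2.symm⟩
        rw [phiE_eq3 haeq1 haeq2 heD]
        rcases hchi with hc | hc <;> rw [hc]
        · rw [o1]
          have hkeep : AEq E d A (D \ {drev e}) (padd (D \ {drev e}) e) := by
            rw [pad1]; exact ⟨hsh1.1, hDf, hsh1.2⟩
          have hkeep2 : AEq E d A (D \ {drev e}) (psub (D \ {drev e}) e) := by
            rw [ps1]; exact ⟨hsh1.1, hsh0.1, hsh1.2.trans hsh0.2.symm⟩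
          have hmem : chi E' e ∈ D \ {drev e} := by
            rw [hc]; exact mem_sdiff.2 ⟨heD, by simp [hed]⟩
          rw [psiE_eq3 hkeep hkeep2 hmem, pad1]
        · rw [o2]
          have hkeep : AEq E d A (D \ {e}) (padd (D \ {e}) e) := by
            rw [pad2]; exact ⟨hsh2.1, hDf, hsh2.2⟩
          have hkeep2 : AEq E d A (D \ {e}) (psub (D \ {e}) e) := by
            rw [ps2]; exact ⟨hsh2.1, hsh0.1, hsh2.2.trans hsh0.2.symm⟩
          have hmem : chi E' e ∈ D \ {e} := by
            rw [hc]; exact mem_sdiff.2 ⟨hreD, by simp [hde]⟩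
          rw [psiE_eq3 hkeep hkeep2 hmem, pad2]
  case neg =>
    have hreD : drev e ∉ D := fun h => heD (hDe.2 h)
    have hD3E : D ∪ {e, drev e} ⊆ E := by
      intro x hx
      rcases mem_union.1 hx with hx | hx
      · exact hD hx
      · rcases mem_insert.1 hx with rfl | hx
        · exact he
        · rw [mem_singleton.1 hx]; exact hre
    have hD1E : insert e D ⊆ E := insert_subset he hD
    have hD2E : insert (drev e) D ⊆ E := insert_subset hre hD
    have hD1f : AdmitsFlow E (insert e D) d := hDf.superset (subset_insert _ _)
    have hD2f : AdmitsFlow E (insert (drev e) D) d := hDf.superset (subset_insert _ _)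
    have hD3f : AdmitsFlow E (D ∪ {e, drev e}) d := hDf.superset subset_union_left
    have o1 : oplus D e = insert e D := by
      ext x
      simp only [oplus, mem_sdiff, mem_insert, mem_singleton]
      constructor
      · rintro ⟨h, -⟩; exact h
      · intro h
        refine ⟨h, ?_⟩
        rintro rfl
        rcases h with h | h
        exacts [hde h, hreD h]
    have o2 : oplus D (drev e) = insert (drev e) D := by
      ext x
      simp only [oplus, mem_sdiff, mem_insert, mem_singleton, drev_drev]
      constructor
      · rintro ⟨h, -⟩; exact h
      · intro h
        refine ⟨h, ?_⟩
        rintro rfl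
        rcases h with h | h
        exacts [hed h, heD h]
    have q1 : padd (insert e D) e = D ∪ {e, drev e} := by
      ext x
      simp only [padd, mem_union, mem_insert, mem_singleton]
      tauto
    have q2 : padd (insert (drev e) D) e = D ∪ {e, drev e} := by
      ext x
      simp only [padd, mem_union, mem_insert, mem_singleton]
      tauto
    have r1 : psub (insert e D) e = D := by
      ext x
      simp only [psub, mem_sdiff, mem_insert, mem_singleton]
      constructor
      · rintro ⟨h | h, h2⟩
        · exact absurd (Or.inl h) h2
        · exact h
      · intro h
        refine ⟨Or.inr h, ?_⟩
        rintro (rfl | rfl)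
        exacts [heD h, hreD h]
    have r2 : psub (insert (drev e) D) e = D := by
      ext x
      simp only [psub, mem_sdiff, mem_insert, mem_singleton]
      constructor
      · rintro ⟨h | h, h2⟩
        · exact absurd (Or.inr h) h2
        · exact h
      · intro h
        refine ⟨Or.inr h, ?_⟩
        rintro (rfl | rfl)
        exacts [heD h, hreD h]
    by_cases hA1 : A (insert e D) = A D
    · by_cases hA2 : A (insert (drev e) D) = A D
      · have haeq1 : AEq E d A D (oplus D e) := by
          rw [o1]; exact ⟨hDf, hD1f, hA1.symm⟩
        have haeq2 : AEq E d A D (oplus D (drev e)) := by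
          rw [o2]; exact ⟨hDf, hD2f, hA2.symm⟩
        rw [phiE_eq4 haeq1 haeq2 heD]
        have hA3 : A (D ∪ {e, drev e}) = A D := by
          rcases at_most_one hA hE_symm hw hD3E hD3f he hne with h | h
          · have hsub : A (D ∪ {e, drev e}) ⊆ insert (drev e) D := by
              intro x hx
              rcases mem_union.1 (A_subset hA hD3E hD3f hx) with h' | h'
              · exact mem_insert_of_mem h'
              · rcases mem_insert.1 h' with rfl | h'
                · exact absurd hx h
                · rw [mem_singleton.1 h']
                  exact mem_insert_self _ _
            have hsh := A_shrink hA hD3E hD3f hsub (by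
              intro x hx
              rcases mem_insert.1 hx with rfl | hx
              · exact mem_union_right _ (mem_insert_of_mem (mem_singleton_self _))
              · exact mem_union_left _ hx)
            exact hsh.2.symm.trans hA2
          · have hsub : A (D ∪ {e, drev e}) ⊆ insert e D := by
              intro x hx
              rcases mem_union.1 (A_subset hA hD3E hD3f hx) with h' | h'
              · exact mem_insert_of_mem h'
              · rcases mem_insert.1 h' with rfl | h'
                · exact mem_insert_self _ _
                · rw [mem_singleton.1 h'] at hx
                  exact absurd hx h
            have hsh := A_shrink hA hD3E hD3f hsub (by
              intro x hx
              rcases mem_insert.1 hx with rfl | hx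
              · exact mem_union_right _ (mem_insert_self _ _)
              · exact mem_union_left _ hx)
            exact hsh.2.symm.trans hA1
        rcases hchi with hc | hc <;> rw [hc]
        · rw [o2]
          have k1 : AEq E d A (insert (drev e) D) (padd (insert (drev e) D) e) := by
            rw [q2]; exact ⟨hD2f, hD3f, hA2.trans hA3.symm⟩
          have k2 : AEq E d A (insert (drev e) D) (psub (insert (drev e) D) e) := by
            rw [r2]; exact ⟨hD2f, hDf, hA2⟩
          have hmem : chi E' e ∉ insert (drev e) D := by
            rw [hc, mem_insert]
            rintro (h | h)
            exacts [hed h, heD h]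
          rw [psiE_eq4 k1 k2 hmem, r2]
        · rw [drev_drev, o1]
          have k1 : AEq E d A (insert e D) (padd (insert e D) e) := by
            rw [q1]; exact ⟨hD1f, hD3f, hA1.trans hA3.symm⟩
          have k2 : AEq E d A (insert e D) (psub (insert e D) e) := by
            rw [r1]; exact ⟨hD1f, hDf, hA1⟩
          have hmem : chi E' e ∉ insert e D := by
            rw [hc, mem_insert]
            rintro (h | h)
            exacts [hde h, hreD h]
          rw [psiE_eq4 k1 k2 hmem, r1]
      · have haeq1 : AEq E d A D (oplus D e) := by
          rw [o1]; exact ⟨hDf, hD1f, hA1.symm⟩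
        have haeq2 : ¬ AEq E d A D (oplus D (drev e)) := by
          rw [o2]; rintro ⟨-, -, h⟩; exact hA2 h.symm
        rw [phiE_eq2 haeq1 haeq2, o1]
        have hset : D ∪ {drev e, drev (drev e)} = D ∪ {e, drev e} := by
          rw [drev_drev, Finset.pair_comm]
        have hkey : drev e ∈ A (D ∪ {e, drev e}) := by
          have hk := key_lemma hA hE_symm hw hD hDf hre (fun h => hne h.symm) hreD
            (by rw [drev_drev]; exact heD) hA2
          rwa [hset] at hk
        have hdrop : ¬ AEq E d A (insert e D) (padd (insert e D) e) := by
          rw [q1]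
          rintro ⟨-, -, h⟩
          have h3 : drev e ∈ A (insert e D) := h.symm ▸ hkey
          rcases mem_insert.1 (A_subset hA hD1E hD1f h3) with h' | h'
          exacts [hde h', hreD h']
        rw [psiE_eq1 hdrop, r1]
    · have haeq1 : ¬ AEq E d A D (oplus D e) := by
        rw [o1]; rintro ⟨-, -, h⟩; exact hA1 h.symm
      rw [phiE_eq1 haeq1, o2]
      have hkey : e ∈ A (D ∪ {e, drev e}) :=
        key_lemma hA hE_symm hw hD hDf he hne heD hreD hA1
      have hdrop : ¬ AEq E d A (insert (drev e) D) (padd (insert (drev e) D) e) := by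
        rw [q2]
        rintro ⟨-, -, h⟩
        have h3 : e ∈ A (insert (drev e) D) := h.symm ▸ hkey
        rcases mem_insert.1 (A_subset hA hD2E hD2f h3) with h' | h'
        exacts [hed h', heD h']
      rw [psiE_eq1 hdrop, r2]
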